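/- Let λ > 0 and Δt > 0, and set x = Δt√λ. For the P¹-DG matrix G with a = 0, assume x > 4 so that the eigenvalues are real. Then the squared spectral radius ρ(G)² = ((x√(x²-16) + x² - 4)/(2x² + 4))² satisfies ρ(G)² = 1/9 at x = 4, is strictly increasing for x > 4, and tends to 1 as x → ∞; in particular ρ(G) < 1 for all x > 4. -/

import Mathlib

open Filter

noncomputable def Dfun (x : ℝ) : ℝ := x ^ 2 + 8 + x * Real.sqrt (x ^ 2 - 16)
noncomputable def gfun (x : ℝ) : ℝ := 1 - 16 / Dfun x

lemma D_lb {x : ℝ} (hx : 4 ≤ x) : 24 ≤ Dfun x := by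
  have h0 : (0:ℝ) ≤ Real.sqrt (x ^ 2 - 16) := Real.sqrt_nonneg _
  have h1 : 0 ≤ x * Real.sqrt (x ^ 2 - 16) := mul_nonneg (by linarith) h0
  unfold Dfun; nlinarith

lemma D_pos {x : ℝ} (hx : 4 ≤ x) : 0 < Dfun x := lt_of_lt_of_le (by norm_num) (D_lb hx)

lemma x_sq_le_D {x : ℝ} (hx : 4 ≤ x) : x ^ 2 ≤ Dfun x := by
  have h1 : 0 ≤ x * Real.sqrt (x ^ 2 - 16) :=
    mul_nonneg (by linarith) (Real.sqrt_nonneg _)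
  unfold Dfun; linarith

lemma D_strictMono : StrictMonoOn Dfun (Set.Ici 4) := by
  intro a ha b hb hab
  simp only [Set.mem_Ici] at ha hb
  have h1 : Real.sqrt (a ^ 2 - 16) ≤ Real.sqrt (b ^ 2 - 16) :=
    Real.sqrt_le_sqrt (by nlinarith)
  have h2 : 0 ≤ Real.sqrt (a ^ 2 - 16) := Real.sqrt_nonneg _
  have h3 : a * Real.sqrt (a ^ 2 - 16) ≤ b * Real.sqrt (b ^ 2 - 16) := by
    calc a * Real.sqrt (a ^ 2 - 16) ≤ b * Real.sqrt (a ^ 2 - 16) := by nlinarith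
    _ ≤ b * Real.sqrt (b ^ 2 - 16) := by nlinarith
  unfold Dfun; nlinarith

lemma key {x : ℝ} (hx : 4 ≤ x) :
    ((x * Real.sqrt (x ^ 2 - 16) + x ^ 2 - 4) / (2 * x ^ 2 + 4)) ^ 2 = gfun x ^ 2 := by
  have hnn : (0:ℝ) ≤ x ^ 2 - 16 := by nlinarith
  have hh : Real.sqrt (x ^ 2 - 16) ^ 2 = x ^ 2 - 16 := Real.sq_sqrt hnn
  have hD : 0 < Dfun x := D_pos hx
  have hD' : Dfun x ≠ 0 := ne_of_gt hD
  have hden : (2 * x ^ 2 + 4) ≠ 0 := by positivity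
  have hbase : (x * Real.sqrt (x ^ 2 - 16) + x ^ 2 - 4) / (2 * x ^ 2 + 4) = gfun x := by
    unfold gfun at *
    unfold Dfun at *
    field_simp
    nlinarith [hh, Real.sqrt_nonneg (x ^ 2 - 16)]
  rw [hbase]

lemma g_nonneg {x : ℝ} (hx : 4 ≤ x) : 0 ≤ gfun x := by
  have h1 : 16 / Dfun x ≤ 16 / 24 :=
    div_le_div_of_nonneg_left (by norm_num) (by norm_num) (D_lb hx)
  unfold gfun; linarith

lemma g_lt_one {x : ℝ} (hx : 4 ≤ x) : gfun x < 1 := by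
  have h1 : 0 < 16 / Dfun x := div_pos (by norm_num) (D_pos hx)
  unfold gfun; linarith

/-- behaviour of the squared spectral radius of the P¹-DG matrix
(a = 0) in the real-eigenvalue regime x = Δt√λ > 4. -/
theorem stmt_9 (f : ℝ → ℝ)
    (hf : f = fun x => ((x * Real.sqrt (x ^ 2 - 16) + x ^ 2 - 4) / (2 * x ^ 2 + 4)) ^ 2) :
    f 4 = 1 / 9 ∧
    StrictMonoOn f (Set.Ici 4) ∧
    Tendsto f atTop (nhds 1) ∧
    (∀ x : ℝ, 4 < x → f x < 1) := by
  subst hf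
  refine ⟨?_, ?_, ?_, ?_⟩
  · norm_num
  · intro a ha b hb hab
    simp only [Set.mem_Ici] at ha hb
    simp only
    rw [key ha, key hb]
    have hgab : gfun a < gfun b := by
      have hD : Dfun a < Dfun b := D_strictMono ha hb hab
      have : 16 / Dfun b < 16 / Dfun a :=
        div_lt_div_of_pos_left (by norm_num) (D_pos ha) hD
      unfold gfun; linarith
    exact pow_lt_pow_left₀ hgab (g_nonneg ha) two_ne_zero
  · have hev : (fun x => ((x * Real.sqrt (x ^ 2 - 16) + x ^ 2 - 4) / (2 * x ^ 2 + 4)) ^ 2)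
        =ᶠ[atTop] fun x => gfun x ^ 2 := by
      filter_upwards [eventually_ge_atTop (4:ℝ)] with x hx
      exact key hx
    have h0 : Tendsto (fun x : ℝ => 16 / Dfun x) atTop (nhds 0) := by
      apply squeeze_zero'
      · filter_upwards [eventually_ge_atTop (4:ℝ)] with x hx
        exact le_of_lt (div_pos (by norm_num) (D_pos hx))
      · filter_upwards [eventually_ge_atTop (4:ℝ)] with x hx
        exact div_le_div_of_nonneg_left (by norm_num) (by positivity) (x_sq_le_D hx)
      · exact tendsto_const_nhds.div_atTop (tendsto_pow_atTop two_ne_zero)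
    have hg : Tendsto gfun atTop (nhds 1) := by
      have h1 : Tendsto (fun x : ℝ => 1 - 16 / Dfun x) atTop (nhds (1 - 0)) :=
        Tendsto.sub tendsto_const_nhds h0
      have h2 : Tendsto (fun x : ℝ => 1 - 16 / Dfun x) atTop (nhds 1) := by simpa using h1
      exact h2
    have : Tendsto (fun x : ℝ => gfun x ^ 2) atTop (nhds 1) := by
      simpa using hg.pow 2
    exact this.congr' hev.symm
  · intro x hx
    simp only
    rw [key hx.le]
    exact pow_lt_one₀ (g_nonneg hx.le) (g_lt_one hx.le) two_ne_zero
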